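/- arXiv:2601.09914 — 2 statements merged into one kernel-verified Lean document; each statement's English description precedes it below -/
import Mathlib

section
/- Let μ and ν be probability measures on ℝ, each with integrable identity of mean zero, ν((-∞,0)) = 1/2 = ν((0,∞)), and ν gives positive mass to (-∞,0) and (0,∞). Let F > 0, H > 0 and C be real numbers and set π_x(θ,ω) = (B + θ)·F + ω·H − C for a real constant B. Let v < 0. Then, under the product measure μ ⊗ ν, the cross-partial N = v·[ (1/2)·∫_{ℝ×(-∞,0)} π_x d(μ⊗ν) − (1/2)·∫_{ℝ×(0,∞)} π_x d(μ⊗ν) ] is strictly positive; consequently, for any D < 0, ∂x*/∂γ = −N/D is strictly positive. (Proposition 3.1, risk-increasing case: an index insurance contract triggered on the extraction shock at ω̄ = 0 increases optimal input use and harvest when h'(x) > 0 and the shocks are independent.) -/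
open MeasureTheory Set

lemma aux_disj : Disjoint (Iio (0:ℝ)) (Ioi 0) :=
  (Iio_disjoint_Ici le_rfl).mono_right Ioi_subset_Ici_self

lemma aux_set_integral (μ ν : Measure ℝ) [IsProbabilityMeasure μ] [IsProbabilityMeasure ν]
    (hIntμ : Integrable id μ) (hmeanμ : ∫ θ, θ ∂μ = 0)
    (hIntν : Integrable id ν)
    (B F H C : ℝ) (S : Set ℝ) :
    ∫ p in (univ : Set ℝ) ×ˢ S, ((B + p.1) * F + p.2 * H - C) ∂(μ.prod ν)
      = (B * F - C) * (ν S).toReal + H * ∫ ω in S, ω ∂ν := by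
  have hrw : (μ.prod ν).restrict ((univ : Set ℝ) ×ˢ S) = μ.prod (ν.restrict S) := by
    rw [← Measure.prod_restrict, Measure.restrict_univ]
  have hfin : IsFiniteMeasure (ν.restrict S) :=
    ⟨by rw [Measure.restrict_apply_univ]; exact measure_lt_top ν S⟩
  have hf : Integrable (fun θ : ℝ => (B + θ) * F - C) μ := by
    have := (hIntμ.const_mul F).add (integrable_const (B * F - C))
    apply this.congr
    exact Filter.Eventually.of_forall (fun x => by simp [id]; ring)
  have hg2 : Integrable (fun ω : ℝ => ω * H) (ν.restrict S) := by
    have := (hIntν.restrict (s := S)).mul_const H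
    exact this.congr (Filter.Eventually.of_forall (fun x => by simp [id]))
  have hI1 : Integrable (fun p : ℝ × ℝ => ((B + p.1) * F - C) * 1)
      (μ.prod (ν.restrict S)) :=
    Integrable.mul_prod (f := fun θ : ℝ => (B + θ) * F - C) (g := fun _ : ℝ => (1:ℝ))
      hf (integrable_const (1:ℝ))
  have hI2 : Integrable (fun p : ℝ × ℝ => (1 : ℝ) * (p.2 * H))
      (μ.prod (ν.restrict S)) :=
    Integrable.mul_prod (f := fun _ : ℝ => (1:ℝ)) (g := fun ω : ℝ => ω * H)
      (integrable_const (1:ℝ)) hg2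
  calc ∫ p in (univ : Set ℝ) ×ˢ S, ((B + p.1) * F + p.2 * H - C) ∂(μ.prod ν)
      = ∫ p, (((B + p.1) * F - C) * 1 + (1 : ℝ) * (p.2 * H)) ∂(μ.prod (ν.restrict S)) := by
        rw [← hrw]
        exact integral_congr_ae (Filter.Eventually.of_forall (fun p => by ring))
    _ = (∫ p : ℝ × ℝ, ((B + p.1) * F - C) * 1 ∂(μ.prod (ν.restrict S)))
        + ∫ p : ℝ × ℝ, (1 : ℝ) * (p.2 * H) ∂(μ.prod (ν.restrict S)) := integral_add hI1 hI2
    _ = (∫ θ, ((B + θ) * F - C) ∂μ) * (∫ ω, (1 : ℝ) ∂(ν.restrict S))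
        + (∫ θ, (1 : ℝ) ∂μ) * ∫ ω, ω * H ∂(ν.restrict S) := by
        rw [integral_prod_mul (fun θ => (B + θ) * F - C) (fun _ => (1 : ℝ)),
          integral_prod_mul (fun _ => (1 : ℝ)) (fun ω => ω * H)]
    _ = (B * F - C) * (ν S).toReal + H * ∫ ω in S, ω ∂ν := by
        have h1 : ∫ θ, ((B + θ) * F - C) ∂μ = B * F - C := by
          have heq : ∀ θ : ℝ, (B + θ) * F - C = F * θ + (B * F - C) := fun θ => by ring
          have hInt' : Integrable (fun θ : ℝ => F * θ) μ := by
            simpa using hIntμ.const_mul F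
          simp_rw [heq]
          rw [integral_add hInt' (integrable_const _), integral_const_mul]
          simp only [measure_univ, integral_const, measureReal_def, ENNReal.toReal_one, one_smul]
          rw [show ∫ a, a ∂μ = 0 from hmeanμ]
          ring
        have h2 : ∫ ω, ω * H ∂(ν.restrict S) = (∫ ω in S, ω ∂ν) * H :=
          integral_mul_const H (fun ω => ω)
        simp only [integral_const, measureReal_def, measure_univ, ENNReal.toReal_one, one_smul, smul_eq_mul,
          Measure.restrict_apply_univ, h1, h2]
        ring

/-- Proposition 3.1, risk-increasing case: with independent mean-zero shocks
(product measure μ ⊗ ν), marginal profit π_x(θ,ω) = (B + θ)·F + ω·H − C with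
F > 0 and H > 0, median-0 trigger on ω (ν(−∞,0) = 1/2 = ν(0,∞), both with
positive mass), and concave utility (common second derivative v < 0), the
cross-partial N = v·[(1/2)·∫_{ℝ×(−∞,0)} π_x − (1/2)·∫_{ℝ×(0,∞)} π_x] is
strictly positive; hence for any D < 0, ∂x*/∂γ = −N/D > 0: the contract on the
extraction shock increases optimal input use and harvest. -/
theorem stmt_8 (μ ν : Measure ℝ) [IsProbabilityMeasure μ] [IsProbabilityMeasure ν]
    (hIntμ : Integrable id μ) (hmeanμ : ∫ θ, θ ∂μ = 0)
    (hIntν : Integrable id ν) (hmeanν : ∫ ω, ω ∂ν = 0)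
    (hmed1 : ν (Iio 0) = 1/2) (hmed2 : ν (Ioi 0) = 1/2)
    (hneg : 0 < ν (Iio 0)) (hpos : 0 < ν (Ioi 0))
    (B F H C v : ℝ) (hF : 0 < F) (hH : 0 < H) (hv : v < 0)
    (N : ℝ)
    (hN : N = v * ((1/2) * ∫ p in (univ : Set ℝ) ×ˢ (Iio (0 : ℝ)),
              ((B + p.1) * F + p.2 * H - C) ∂(μ.prod ν)
            - (1/2) * ∫ p in (univ : Set ℝ) ×ˢ (Ioi (0 : ℝ)),
              ((B + p.1) * F + p.2 * H - C) ∂(μ.prod ν))) :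
    0 < N ∧ ∀ D : ℝ, D < 0 → 0 < -N / D := by
  have hunion : ν (Iio (0:ℝ) ∪ Ioi 0) = 1 := by
    rw [measure_union aux_disj measurableSet_Ioi, hmed1, hmed2]
    rw [show (1/2 : ENNReal) = 2⁻¹ by norm_num, ENNReal.inv_two_add_inv_two]
  have hzero : ν ((Iio (0:ℝ) ∪ Ioi 0)ᶜ) = 0 := by
    rw [measure_compl (measurableSet_Iio.union measurableSet_Ioi) (measure_ne_top _ _),
      measure_univ, hunion, tsub_self]
  have hIO1 : IntegrableOn (fun ω : ℝ => ω) (Iio 0) ν := hIntν.integrableOn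
  have hIO2 : IntegrableOn (fun ω : ℝ => ω) (Ioi 0) ν := hIntν.integrableOn
  -- the two tail integrals sum to zero
  have hsum : (∫ ω in Iio (0:ℝ), ω ∂ν) + (∫ ω in Ioi (0:ℝ), ω ∂ν) = 0 := by
    have h1 : ∫ ω in Iio (0:ℝ) ∪ Ioi 0, ω ∂ν = ∫ ω in (univ : Set ℝ), ω ∂ν :=
      setIntegral_congr_set (ae_eq_univ.2 hzero)
    rw [setIntegral_union aux_disj measurableSet_Ioi hIO1 hIO2, setIntegral_univ, hmeanν] at h1
    exact h1
  -- the positive-side integral is strictly positive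
  have hIoi : 0 < ∫ ω in Ioi (0:ℝ), ω ∂ν := by
    have hae : 0 ≤ᵐ[ν.restrict (Ioi (0:ℝ))] (fun ω : ℝ => ω) :=
      (ae_restrict_iff' measurableSet_Ioi).2
        (Filter.Eventually.of_forall (fun x hx => le_of_lt hx))
    refine (setIntegral_pos_iff_support_of_nonneg_ae hae hIO2).2 ?_
    have hsupp : Function.support (fun ω : ℝ => ω) ∩ Ioi 0 = Ioi 0 :=
      inter_eq_self_of_subset_right (fun x hx => ne_of_gt hx)
    rw [hsupp]
    exact hpos
  have htoR : ∀ S : Set ℝ, ν S = 1/2 → (ν S).toReal = 1/2 := by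
    intro S hS; rw [hS]; simp [ENNReal.toReal_div]
  have hI1 : ∫ p in (univ : Set ℝ) ×ˢ (Iio (0:ℝ)),
      ((B + p.1) * F + p.2 * H - C) ∂(μ.prod ν)
      = (B * F - C) * (1/2) + H * ∫ ω in Iio (0:ℝ), ω ∂ν := by
    rw [aux_set_integral μ ν hIntμ hmeanμ hIntν B F H C (Iio 0), htoR _ hmed1]
  have hI2 : ∫ p in (univ : Set ℝ) ×ˢ (Ioi (0:ℝ)),
      ((B + p.1) * F + p.2 * H - C) ∂(μ.prod ν)
      = (B * F - C) * (1/2) + H * ∫ ω in Ioi (0:ℝ), ω ∂ν := by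
    rw [aux_set_integral μ ν hIntμ hmeanμ hIntν B F H C (Ioi 0), htoR _ hmed2]
  have hNval : N = -v * H * ∫ ω in Ioi (0:ℝ), ω ∂ν := by
    rw [hN, hI1, hI2]
    have h3 : (∫ ω in Iio (0:ℝ), ω ∂ν) = -∫ ω in Ioi (0:ℝ), ω ∂ν := by linarith
    rw [h3]; ring
  have hNpos : 0 < N := by
    rw [hNval]
    have hv' : 0 < -v := by linarith
    positivity
  exact ⟨hNpos, fun D hD => div_pos_of_neg_of_neg (by linarith) hD⟩
end

section
/- Let μ and ν be probability measures on ℝ, each with integrable identity of mean zero, μ((-∞,0)) = 1/2 = μ((0,∞)), and μ gives positive mass to (-∞,0) and (0,∞). Let F > 0, C and H be arbitrary real numbers and set π_x(θ,ω) = (B + θ)·F + ω·H − C for a real constant B. Let v < 0. Then, under the product measure μ ⊗ ν, the cross-partial N = v·[ (1/2)·∫_{(-∞,0)×ℝ} π_x d(μ⊗ν) − (1/2)·∫_{(0,∞)×ℝ} π_x d(μ⊗ν) ] is strictly positive, regardless of the sign of H; consequently, for any D < 0, ∂x*/∂γ = −N/D is strictly positive. (Proposition 3.2: an index insurance contract triggered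 on the stock shock at θ̄ = 0 always increases optimal input use and harvest.) -/
open MeasureTheory Set

lemma key_int (μ ν : Measure ℝ) [IsProbabilityMeasure μ] [IsProbabilityMeasure ν]
    (hIntμ : Integrable id μ) (hIntν : Integrable id ν) (hmeanν : ∫ ω, ω ∂ν = 0)
    (B F H C : ℝ) (s : Set ℝ) :
    ∫ p in s ×ˢ (univ : Set ℝ), ((B + p.1) * F + p.2 * H - C) ∂(μ.prod ν)
      = F * (∫ θ in s, θ ∂μ) + (B * F - C) * (μ s).toReal := by
  set ρ := μ.restrict s with hρ
  have hr : (μ.prod ν).restrict (s ×ˢ (univ : Set ℝ)) = ρ.prod ν := by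
    rw [hρ, ← Measure.prod_restrict, Measure.restrict_univ]
  have hμs : Integrable id ρ := hIntμ.restrict
  have h1 : Integrable (fun p : ℝ × ℝ => (B + p.1) * F - C) (ρ.prod ν) := by
    have hg : Integrable (fun θ : ℝ => (B + θ) * F - C) ρ :=
      (((integrable_const B).add hμs).mul_const F).sub (integrable_const C)
    have hmap : Integrable (fun θ : ℝ => (B + θ) * F - C)
        (Measure.map Prod.fst (ρ.prod ν)) := by
      rw [Measure.map_fst_prod]
      simpa using hg
    exact hmap.comp_measurable measurable_fst
  have h2 : Integrable (fun p : ℝ × ℝ => p.2 * H) (ρ.prod ν) := by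
    have hg : Integrable (fun ω : ℝ => ω * H) ν := hIntν.mul_const H
    have hmap : Integrable (fun ω : ℝ => ω * H) (Measure.map Prod.snd (ρ.prod ν)) := by
      rw [Measure.map_snd_prod]
      exact hg.smul_measure (measure_ne_top ρ univ)
    exact hmap.comp_measurable measurable_snd
  have hInt : Integrable (fun p : ℝ × ℝ => (B + p.1) * F + p.2 * H - C) (ρ.prod ν) :=
    (h1.add h2).congr (Filter.Eventually.of_forall fun p => by simp only [Pi.add_apply]; ring)
  calc ∫ p in s ×ˢ (univ : Set ℝ), ((B + p.1) * F + p.2 * H - C) ∂(μ.prod ν)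
      = ∫ p, ((B + p.1) * F + p.2 * H - C) ∂(ρ.prod ν) := by rw [← hr]
    _ = ∫ θ, (∫ ω, ((B + θ) * F + ω * H - C) ∂ν) ∂ρ := integral_prod _ hInt
    _ = ∫ θ, ((B + θ) * F - C) ∂ρ := by
        apply integral_congr_ae
        filter_upwards with θ
        have h1' : Integrable (fun ω : ℝ => ω * H) ν := hIntν.mul_const H
        have : ∫ ω, ((B + θ) * F + ω * H - C) ∂ν
            = ∫ ω, (ω * H + ((B + θ) * F - C)) ∂ν := by
          congr 1; ext ω; ring
        rw [this, integral_add h1' (integrable_const _), integral_mul_const,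
          hmeanν, integral_const]
        simp
    _ = F * (∫ θ in s, θ ∂μ) + (B * F - C) * (μ s).toReal := by
        have heq : ∫ θ, ((B + θ) * F - C) ∂ρ
            = ∫ θ, (θ * F + (B * F - C)) ∂ρ := by
          congr 1; ext θ; ring
        have hμs' : Integrable (fun θ : ℝ => θ * F) ρ := hμs.mul_const F
        rw [heq, integral_add hμs' (integrable_const _), integral_mul_const,
          integral_const, smul_eq_mul, hρ, measureReal_def, Measure.restrict_apply_univ]
        ring

/-- Proposition 3.2: with independent mean-zero shocks (product measure μ ⊗ ν),
marginal profit π_x(θ,ω) = (B + θ)·F + ω·H − C with F > 0 and H arbitrary,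
median-0 trigger on θ (μ(−∞,0) = 1/2 = μ(0,∞), both with positive mass), and
concave utility (common second derivative v < 0), the cross-partial
N = v·[(1/2)·∫_{(−∞,0)×ℝ} π_x − (1/2)·∫_{(0,∞)×ℝ} π_x] is strictly positive
regardless of the sign of H; hence for any D < 0, ∂x*/∂γ = −N/D > 0: a
contract triggered on the stock shock always increases optimal input use and
harvest. -/
theorem stmt_9 (μ ν : Measure ℝ) [IsProbabilityMeasure μ] [IsProbabilityMeasure ν]
    (hIntμ : Integrable id μ) (hmeanμ : ∫ θ, θ ∂μ = 0)
    (hIntν : Integrable id ν) (hmeanν : ∫ ω, ω ∂ν = 0)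
    (hmed1 : μ (Iio 0) = 1/2) (hmed2 : μ (Ioi 0) = 1/2)
    (hneg : 0 < μ (Iio 0)) (hpos : 0 < μ (Ioi 0))
    (B F H C v : ℝ) (hF : 0 < F) (hv : v < 0)
    (N : ℝ)
    (hN : N = v * ((1/2) * ∫ p in (Iio (0 : ℝ)) ×ˢ (univ : Set ℝ),
              ((B + p.1) * F + p.2 * H - C) ∂(μ.prod ν)
            - (1/2) * ∫ p in (Ioi (0 : ℝ)) ×ˢ (univ : Set ℝ),
              ((B + p.1) * F + p.2 * H - C) ∂(μ.prod ν))) :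
    0 < N ∧ ∀ D : ℝ, D < 0 → 0 < -N / D := by
  have hIio := key_int μ ν hIntμ hIntν hmeanν B F H C (Iio 0)
  have hIoi := key_int μ ν hIntμ hIntν hmeanν B F H C (Ioi 0)
  have hdisj : Disjoint (Iio (0:ℝ)) (Ioi 0) := by
    rw [Set.disjoint_left]; intro x hx hx'
    simp only [mem_Iio] at hx
    simp only [mem_Ioi] at hx'
    exact lt_asymm hx hx'
  have hcompl : (Iio (0:ℝ)) ∪ Ioi 0 = ({0} : Set ℝ)ᶜ := by
    ext x; simp [lt_or_lt_iff_ne]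
  have hu : μ ((Iio (0:ℝ)) ∪ Ioi 0) = 1 := by
    rw [measure_union hdisj measurableSet_Ioi, hmed1, hmed2,
      ENNReal.div_add_div_same, one_add_one_eq_two]
    exact ENNReal.div_self (by norm_num) (by norm_num)
  have h0 : μ ({(0:ℝ)} : Set ℝ) = 0 := by
    have hmc := measure_compl (measurableSet_Iio.union measurableSet_Ioi)
      (measure_ne_top μ ((Iio (0:ℝ)) ∪ Ioi 0))
    rw [hu, measure_univ] at hmc
    have hcc : ((Iio (0:ℝ)) ∪ Ioi 0)ᶜ = ({(0:ℝ)} : Set ℝ) := by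
      rw [hcompl, compl_compl]
    rw [hcc] at hmc
    simpa using hmc
  have hsplit : (∫ θ in Iio (0:ℝ), θ ∂μ) + (∫ θ in Ioi (0:ℝ), θ ∂μ) = 0 := by
    have hU : ∫ θ in (Iio (0:ℝ)) ∪ Ioi 0, θ ∂μ
        = (∫ θ in Iio (0:ℝ), θ ∂μ) + (∫ θ in Ioi (0:ℝ), θ ∂μ) :=
      setIntegral_union hdisj measurableSet_Ioi hIntμ.integrableOn hIntμ.integrableOn
    have hfull : ∫ θ in (Iio (0:ℝ)) ∪ Ioi 0, θ ∂μ = ∫ θ, θ ∂μ := by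
      rw [hcompl]
      have hres : μ.restrict (({0} : Set ℝ)ᶜ) = μ :=
        Measure.restrict_eq_self_of_ae_mem (by
          refine (ae_iff).mpr ?_
          simpa using h0)
      rw [hres]
    rw [← hU, hfull, hmeanμ]
  have hI : 0 < ∫ θ in Ioi (0:ℝ), θ ∂μ := by
    have hnn : 0 ≤ᵐ[μ.restrict (Ioi (0:ℝ))] id := by
      filter_upwards [ae_restrict_mem measurableSet_Ioi] with x hx
      exact le_of_lt hx
    refine (integral_pos_iff_support_of_nonneg_ae hnn hIntμ.restrict).mpr ?_
    have hsupp : Function.support (id : ℝ → ℝ) = ({0} : Set ℝ)ᶜ := by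
      ext x; simp [Function.support]
    rw [hsupp, Measure.restrict_apply (measurableSet_singleton 0).compl]
    have : ({0} : Set ℝ)ᶜ ∩ Ioi 0 = Ioi 0 := by
      apply inter_eq_self_of_subset_right
      intro x hx
      simp only [mem_compl_iff, mem_singleton_iff]
      exact ne_of_gt hx
    rw [this]; exact hpos
  have hIio' : (∫ θ in Iio (0:ℝ), θ ∂μ) = -(∫ θ in Ioi (0:ℝ), θ ∂μ) := by linarith
  have htr : ((1:ENNReal)/2).toReal = 1/2 := by simp
  rw [hmed1, htr] at hIio
  rw [hmed2, htr] at hIoi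
  have hNval : N = -v * F * (∫ θ in Ioi (0:ℝ), θ ∂μ) := by
    rw [hN, hIio, hIoi, hIio']; ring
  have hNpos : 0 < N := by
    rw [hNval]; nlinarith [mul_pos hF hI]
  refine ⟨hNpos, fun D hD => ?_⟩
  rw [div_pos_iff]
  right
  exact ⟨by linarith, hD⟩
end
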